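/- For distinct primes q and r with q ≡ 3 (mod 4) and r ≡ 3 (mod 4), there exists a prime p with p ≡ 1 (mod 4) such that (p/q) = -1 and (p/r) = -1. -/

import Mathlib

/-- Legendre's third auxiliary lemma: for distinct primes `q ≡ r ≡ 3 (mod 4)` there is a
prime `p ≡ 1 (mod 4)` with `(p/q) = (p/r) = -1`. -/
theorem legendre_lemma_three (q r : ℕ) [Fact q.Prime] [Fact r.Prime] (hne : q ≠ r)
    (hq : q % 4 = 3) (hr : r % 4 = 3) :
    ∃ p : ℕ, p.Prime ∧ p % 4 = 1 ∧
      legendreSym q (p : ℤ) = -1 ∧ legendreSym r (p : ℤ) = -1 := by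
  have hqp : q.Prime := Fact.out
  have hrp : r.Prime := Fact.out
  -- nonsquares mod q and r
  have hq2 : ringChar (ZMod q) ≠ 2 := by
    rw [ZMod.ringChar_zmod_n]; omega
  have hr2 : ringChar (ZMod r) ≠ 2 := by
    rw [ZMod.ringChar_zmod_n]; omega
  obtain ⟨b, hb⟩ := FiniteField.exists_nonsquare hq2
  obtain ⟨c, hc⟩ := FiniteField.exists_nonsquare hr2
  have hb0 : b ≠ 0 := fun h => hb (h ▸ ⟨0, by simp⟩)
  have hc0 : c ≠ 0 := fun h => hc (h ▸ ⟨0, by simp⟩)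
  -- coprimality facts
  have hqodd : q % 2 = 1 := by omega
  have hrodd : r % 2 = 1 := by omega
  have h4q : Nat.Coprime 4 q := by
    have : Nat.Coprime 2 q := (Nat.coprime_primes Nat.prime_two hqp).mpr (by omega)
    simpa using (Nat.Coprime.mul this this : Nat.Coprime (2*2) q)
  have hqr : Nat.Coprime q r := (Nat.coprime_primes hqp hrp).mpr hne
  have h4r : Nat.Coprime 4 r := by
    have : Nat.Coprime 2 r := (Nat.coprime_primes Nat.prime_two hrp).mpr (by omega)
    simpa using (Nat.Coprime.mul this this : Nat.Coprime (2*2) r)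
  have h4qr : Nat.Coprime 4 (q * r) := Nat.Coprime.mul_right h4q h4r
  have : NeZero (4 * (q * r)) :=
    ⟨Nat.mul_ne_zero (by norm_num) (Nat.mul_ne_zero hqp.pos.ne' hrp.pos.ne')⟩
  -- CRT equivalences
  let e : ZMod (4 * (q * r)) ≃+* ZMod 4 × ZMod (q * r) := ZMod.chineseRemainder h4qr
  let e2 : ZMod (q * r) ≃+* ZMod q × ZMod r := ZMod.chineseRemainder hqr
  set a : ZMod (4 * (q * r)) := e.symm (1, e2.symm (b, c)) with ha
  have hyU : IsUnit (e2.symm (b, c)) := by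
    refine IsUnit.of_mul_eq_one (e2.symm (b⁻¹, c⁻¹)) ?_
    rw [← map_mul, ← map_one e2.symm]
    congr 1
    exact Prod.ext (mul_inv_cancel₀ hb0) (mul_inv_cancel₀ hc0)
  have haU : IsUnit a := by
    refine IsUnit.of_mul_eq_one (e.symm (1, ↑hyU.unit⁻¹)) ?_
    rw [ha, ← map_mul, ← map_one e.symm]
    congr 1
    exact Prod.ext (one_mul 1) (by simp)
  obtain ⟨p, -, hp, hpa⟩ := Nat.forall_exists_prime_gt_and_eq_mod haU 0
  have hea : e (p : ZMod (4 * (q * r))) = (1, e2.symm (b, c)) := by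
    rw [hpa, ha, RingEquiv.apply_symm_apply]
  have he4 : (p : ZMod 4) = 1 ∧ (p : ZMod (q * r)) = e2.symm (b, c) := by
    have := hea
    rw [show e (p : ZMod (4 * (q * r))) = ((p : ZMod 4), (p : ZMod (q * r))) by
      rw [map_natCast]; rfl] at this
    exact ⟨congrArg Prod.fst this, congrArg Prod.snd this⟩
  have he2 : (p : ZMod q) = b ∧ (p : ZMod r) = c := by
    have h := congrArg e2 he4.2
    rw [RingEquiv.apply_symm_apply, show e2 (p : ZMod (q * r)) = ((p : ZMod q), (p : ZMod r)) by
      rw [map_natCast]; rfl] at h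
    exact ⟨congrArg Prod.fst h, congrArg Prod.snd h⟩
  refine ⟨p, hp, ?_, ?_, ?_⟩
  · have : (p : ZMod 4).val = (1 : ZMod 4).val := congrArg ZMod.val he4.1
    simpa [ZMod.val_natCast, show (1 : ZMod 4).val = 1 from rfl] using this
  · rw [legendreSym.eq_neg_one_iff' (p := q), he2.1]; exact hb
  · rw [legendreSym.eq_neg_one_iff' (p := r), he2.2]; exact hc
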